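/- Suppose a² < 4q. Then for every positive integer X, |M(X)| ≤ 2·√((q + 1 − a)/(4q − a²))·q^{X/2}. -/

import Mathlib

open Real Filter

/-- The coefficient sequence `c_N` with `c_0 = 1`, `c_1 = a - q - 1`,
`c_2 = a*c_1 - q*c_0 + q`, and `c_N = a*c_{N-1} - q*c_{N-2}` for `N ≥ 3`;
these are the Taylor coefficients at `u = 0` of `(1-u)(1-qu)/(1-au+qu²)`,
the reciprocal of the zeta function of an elliptic curve over `F_q` with
Frobenius trace `a`. -/
def mertC (q a : ℤ) : ℕ → ℤ
  | 0 => 1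
  | 1 => a - q - 1
  | 2 => a * (a - q - 1) - q * 1 + q
  | (N + 3) => a * mertC q a (N + 2) - q * mertC q a (N + 1)

/-- `M(X) = ∑_{N=0}^{X-1} c_N`, the Mertens summatory function of the
Möbius function of an elliptic curve over `F_q` with Frobenius trace `a`. -/
def mertM (q a : ℤ) (X : ℕ) : ℤ := ∑ N ∈ Finset.range X, mertC q a N

lemma mertM_succ (q a : ℤ) (X : ℕ) : mertM q a (X + 1) = mertM q a X + mertC q a X := by
  simp [mertM, Finset.sum_range_succ]

lemma mertM_rec (q a : ℤ) (k : ℕ) :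
    mertM q a (k + 3) = a * mertM q a (k + 2) - q * mertM q a (k + 1) := by
  induction k with
  | zero =>
      simp [mertM, Finset.sum_range_succ, mertC]
      ring
  | succ n ih =>
      have h1 : mertM q a (n + 4) = mertM q a (n + 3) + mertC q a (n + 3) := mertM_succ q a (n + 3)
      have h2 : mertM q a (n + 3) = mertM q a (n + 2) + mertC q a (n + 2) := mertM_succ q a (n + 2)
      have h3 : mertM q a (n + 2) = mertM q a (n + 1) + mertC q a (n + 1) := mertM_succ q a (n + 1)
      have hc : mertC q a (n + 3) = a * mertC q a (n + 2) - q * mertC q a (n + 1) := rfl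
      show mertM q a (n + 4) = a * mertM q a (n + 3) - q * mertM q a (n + 2)
      rw [h1, hc]
      linear_combination ih - a * h2 + q * h3

lemma mert_quad (q a : ℤ) (k : ℕ) :
    q * mertM q a (k + 1) ^ 2 - a * mertM q a (k + 1) * mertM q a (k + 2)
      + mertM q a (k + 2) ^ 2 = q ^ (k + 1) * (q + 1 - a) := by
  induction k with
  | zero =>
      simp [mertM, Finset.sum_range_succ, mertC]
      ring
  | succ n ih =>
      rw [mertM_rec q a n]
      have h2 : q ^ (n + 1 + 1) * (q + 1 - a) = q * (q ^ (n + 1) * (q + 1 - a)) := by ring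
      rw [h2, ← ih]; ring

lemma mert_sq_bound (q a : ℤ) (k : ℕ) :
    (4 * q - a ^ 2) * mertM q a (k + 1) ^ 2 ≤ 4 * (q ^ (k + 1) * (q + 1 - a)) := by
  have h := mert_quad q a k
  nlinarith [sq_nonneg (2 * mertM q a (k + 2) - a * mertM q a (k + 1))]

theorem mertens_bound_simple_zeroes (q a : ℤ) (hq : 2 ≤ q) (ha : a ^ 2 < 4 * q) :
    ∀ X : ℕ, 1 ≤ X →
      |(mertM q a X : ℝ)| ≤
        2 * Real.sqrt (((q : ℝ) + 1 - (a : ℝ)) / (4 * (q : ℝ) - (a : ℝ) ^ 2)) *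
          (q : ℝ) ^ ((X : ℝ) / 2) := by
  intro X hX
  obtain ⟨k, rfl⟩ : ∃ k, X = k + 1 := ⟨X - 1, (Nat.succ_pred_eq_of_pos hX).symm⟩
  set m : ℝ := (mertM q a (k + 1) : ℝ) with hm
  have hq4 : (0 : ℝ) < 4 * (q : ℝ) - (a : ℝ) ^ 2 := by
    have ha' : ((a:ℝ))^2 < 4*(q:ℝ) := by exact_mod_cast ha
    linarith
  have haq : (0 : ℝ) < (q : ℝ) + 1 - (a : ℝ) := by
    have h1 : a ≤ q := by nlinarith [sq_nonneg (a - q - 1), sq_nonneg (q - 1)]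
    have : (a : ℝ) ≤ (q : ℝ) := by exact_mod_cast h1
    linarith
  have hqpos : (0 : ℝ) < (q : ℝ) := by
    have : (2:ℝ) ≤ (q:ℝ) := by exact_mod_cast hq
    linarith
  set c : ℝ := ((q : ℝ) + 1 - (a : ℝ)) / (4 * (q : ℝ) - (a : ℝ) ^ 2) with hc
  have hcnn : 0 ≤ c := le_of_lt (div_pos haq hq4)
  -- real version of the integer bound
  have hbound : (4 * (q : ℝ) - (a : ℝ) ^ 2) * m ^ 2 ≤ 4 * ((q : ℝ) ^ (k + 1) * ((q : ℝ) + 1 - (a : ℝ))) := by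
    rw [hm]
    exact_mod_cast mert_sq_bound q a k
  have hm2 : m ^ 2 ≤ 4 * c * (q : ℝ) ^ (k + 1) := by
    have heq : 4 * c * (q : ℝ) ^ (k + 1)
        = 4 * ((q : ℝ) ^ (k + 1) * ((q : ℝ) + 1 - (a : ℝ))) / (4 * (q : ℝ) - (a : ℝ) ^ 2) := by
      rw [hc]; ring
    rw [heq, le_div_iff₀ hq4]
    nlinarith [hbound]
  -- the RHS squared
  set R : ℝ := 2 * Real.sqrt c * (q : ℝ) ^ (((k : ℝ) + 1) / 2) with hR
  have hRnn : 0 ≤ R := by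
    apply mul_nonneg
    · positivity
    · exact le_of_lt (Real.rpow_pos_of_pos hqpos _)
  have hR2 : R ^ 2 = 4 * c * (q : ℝ) ^ (k + 1) := by
    rw [hR]
    have h1 : ((q : ℝ) ^ (((k : ℝ) + 1) / 2)) ^ 2 = (q : ℝ) ^ (k + 1 : ℕ) := by
      rw [← Real.rpow_natCast ((q : ℝ) ^ (((k : ℝ) + 1) / 2)) 2, ← Real.rpow_mul (le_of_lt hqpos)]
      rw [div_mul_eq_mul_div]
      norm_num
      rw [← Real.rpow_natCast (q : ℝ) (k + 1)]
      push_cast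
      ring_nf
    rw [mul_pow, mul_pow, Real.sq_sqrt hcnn, h1]
    ring
  have : |m| ≤ R := by
    rw [← Real.sqrt_sq_eq_abs]
    calc Real.sqrt (m ^ 2) ≤ Real.sqrt (R ^ 2) := by
          apply Real.sqrt_le_sqrt; rw [hR2]; exact hm2
      _ = R := by rw [Real.sqrt_sq hRnn]
  convert this using 2
  push_cast
  ring
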